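/- Suppose a finite simple graph Γ contains a 4-cycle that contains two distinct non-adjacent vertices each of degree 2 in Γ. Then Lights Out is not universally solvable on the complement graph Γ^C. -/
import Mathlib


open scoped Classical in
/-- The neighborhood matrix of a finite simple graph over the field `ZMod 2`:
the entry at `(i, j)` is `1` if `i = j` or `i` and `j` are adjacent, and `0` otherwise. -/
noncomputable def nbhdMatrix {V : Type} [Fintype V] [DecidableEq V] (G : SimpleGraph V) :
    Matrix V V (ZMod 2) :=
  Matrix.of fun i j => if i = j ∨ G.Adj i j then 1 else 0

/-- Lights Out is universally solvable on a finite simple graph iff its neighborhood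
matrix over `ZMod 2` is invertible. -/
def UniversallySolvable {V : Type} [Fintype V] [DecidableEq V] (G : SimpleGraph V) : Prop :=
  IsUnit (nbhdMatrix G)

/-- If a finite simple graph `Γ` contains a 4-cycle through vertices `u, x, v, y` in which
the opposite vertices `u` and `v` are distinct, non-adjacent, and both of degree 2 in `Γ`,
then Lights Out is not universally solvable on the complement graph `Γᶜ`. -/
theorem not_universallySolvable_compl_of_four_cycle {V : Type} [Fintype V]
    [DecidableEq V] (G : SimpleGraph V) [DecidableRel G.Adj] (u v x y : V)
    (huv : u ≠ v) (hxy : x ≠ y)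
    (hux : G.Adj u x) (hxv : G.Adj x v) (hvy : G.Adj v y) (hyu : G.Adj y u)
    (hnadj : ¬ G.Adj u v) (hu2 : G.degree u = 2) (hv2 : G.degree v = 2) :
    ¬ UniversallySolvable Gᶜ := by
  -- the neighbor sets of u and v are both {x, y}
  have hu : G.neighborFinset u = {x, y} := by
    apply Finset.eq_of_subset_of_card_le
    · intro z hz
      have hx : x ∈ G.neighborFinset u := by simp [hux]
      have hy : y ∈ G.neighborFinset u := by simp [hyu.symm]
      have hsub : ({x, y} : Finset V) ⊆ G.neighborFinset u := by
        intro w hw; simp at hw; rcases hw with rfl | rfl <;> assumption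
      have : ({x, y} : Finset V).card = 2 := Finset.card_pair hxy
      have := Finset.eq_of_subset_of_card_le hsub (by rw [this, ← hu2, SimpleGraph.card_neighborFinset_eq_degree])
      rw [this]; exact hz
    · rw [SimpleGraph.card_neighborFinset_eq_degree, hu2, Finset.card_pair hxy]
  have hv : G.neighborFinset v = {x, y} := by
    have hsub : ({x, y} : Finset V) ⊆ G.neighborFinset v := by
      intro w hw; simp at hw
      rcases hw with rfl | rfl
      · simpa using hxv.symm
      · simpa using hvy
    exact (Finset.eq_of_subset_of_card_le hsub (by
      rw [Finset.card_pair hxy, ← hv2, SimpleGraph.card_neighborFinset_eq_degree])).symm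
  have hadj : ∀ j, G.Adj u j ↔ G.Adj v j := by
    intro j
    have h1 : G.Adj u j ↔ j ∈ G.neighborFinset u := by simp
    have h2 : G.Adj v j ↔ j ∈ G.neighborFinset v := by simp
    rw [h1, h2, hu, hv]
  intro h
  have hdet := (Matrix.isUnit_iff_isUnit_det _).mp h
  have hrow : nbhdMatrix Gᶜ u = nbhdMatrix Gᶜ v := by
    funext j
    simp only [nbhdMatrix, Matrix.of_apply]
    have key : ∀ w : V, ¬ G.Adj w w → ((w = j ∨ Gᶜ.Adj w j) ↔ ¬ G.Adj w j) := by
      intro w hw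
      rw [SimpleGraph.compl_adj]
      constructor
      · rintro (rfl | ⟨_, h⟩)
        · exact hw
        · exact h
      · intro h
        by_cases hwj : w = j
        · exact Or.inl hwj
        · exact Or.inr ⟨hwj, h⟩
    have h1 : (u = j ∨ Gᶜ.Adj u j) ↔ (v = j ∨ Gᶜ.Adj v j) := by
      rw [key u G.irrefl, key v G.irrefl, not_congr (hadj j)]
    simp only [h1]
    congr 1
  rw [Matrix.det_zero_of_row_eq huv hrow] at hdet
  simp at hdet
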